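/- Let r, m, s be positive integers and set q(t) = t + t(t−1)·z′(t)/(r·z(t)). Then on any open interval of real numbers t with t ∉ {0,1} on which z(t) ≠ 0, the function q satisfies the Riccati equation q′ = (1/(t(t−1)))·((b₄−b₃)q² + (2b₁t + b₂ − b₄ − 1)q − (b₁+b₂)t). -/

import Mathlib

open Polynomial Finset

/-- `z(t) = Σ_{j=0}^m (−1)^j (C(r+j−1,j)·C(m,j)/C(s+j−1,j)) t^j`, the terminating
hypergeometric polynomial `₂F₁(r, −m; s; t)`. -/
noncomputable def z (r m s : ℕ) : Polynomial ℚ :=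
  ∑ j ∈ range (m + 1),
    C ((-1 : ℚ) ^ j * (Nat.choose (r + j - 1) j : ℚ) * (Nat.choose m j : ℚ)
        / (Nat.choose (s + j - 1) j : ℚ)) * X ^ j

/-- `z` evaluated as a real function. -/
noncomputable def zf (r m s : ℕ) : ℝ → ℝ := fun t => aeval t (z r m s)

/-- `z′` evaluated as a real function. -/
noncomputable def zf' (r m s : ℕ) : ℝ → ℝ := fun t => aeval t (derivative (z r m s))

/-- The seed solution `q(t) = t + t(t−1)z′(t)/(r·z(t))`. -/
noncomputable def qseed (r m s : ℕ) : ℝ → ℝ :=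
  fun t => t + t * (t - 1) * zf' r m s t / ((r : ℝ) * zf r m s t)

noncomputable def cz (r m s j : ℕ) : ℚ :=
  (-1 : ℚ) ^ j * (Nat.choose (r + j - 1) j : ℚ) * (Nat.choose m j : ℚ)
      / (Nat.choose (s + j - 1) j : ℚ)


lemma coeff_z (r m s n : ℕ) : (z r m s).coeff n = cz r m s n := by
  rw [z, finset_sum_coeff]
  simp only [coeff_C_mul, coeff_X_pow, mul_ite, mul_one, mul_zero]
  rw [Finset.sum_ite_eq (range (m+1)) n]
  by_cases h : n ∈ range (m+1)
  · simp [h, cz]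
  · simp only [h, if_neg]
    have : m < n := by simpa using Nat.lt_of_succ_le (not_lt.mp (by simpa using h))
    simp [cz, Nat.choose_eq_zero_of_lt this]

lemma rec_cz (r m s : ℕ) (hr : 0 < r) (hs : 0 < s) (n : ℕ) :
    ((n : ℚ) + 1) * ((s : ℚ) + n) * cz r m s (n + 1)
      + ((r : ℚ) + n) * ((m : ℚ) - n) * cz r m s n = 0 := by
  rcases le_or_gt m n with h | h
  · rcases eq_or_lt_of_le h with rfl | h
    · simp [cz, Nat.choose_eq_zero_of_lt (Nat.lt_succ_self m)]
    · simp [cz, Nat.choose_eq_zero_of_lt h, Nat.choose_eq_zero_of_lt (Nat.lt_succ_of_lt h)]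
  · -- n < m
    have hn1 : ((n : ℚ) + 1) ≠ 0 := by positivity
    have hA0 : (r + n - 1 + 1) * ((r + n - 1).choose n) = (r + n - 1 + 1).choose (n+1) * (n+1) :=
      Nat.add_one_mul_choose_eq (r + n - 1) n
    have h1 : r + n - 1 + 1 = r + n := by omega
    rw [h1] at hA0
    have eA : ((r + n).choose (n + 1) : ℚ)
        = ((r : ℚ) + n) * ((r + n - 1).choose n : ℚ) / ((n : ℚ) + 1) := by
      rw [eq_div_iff hn1]
      have := congrArg (fun k : ℕ => (k : ℚ)) hA0
      push_cast at this
      linarith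
    have hB0 : m.choose (n+1) * (n+1) = m.choose n * (m - n) := Nat.choose_succ_right_eq m n
    have eB : ((m.choose (n+1)) : ℚ) = (m.choose n : ℚ) * ((m : ℚ) - n) / ((n : ℚ) + 1) := by
      rw [eq_div_iff hn1]
      have := congrArg (fun k : ℕ => (k : ℚ)) hB0
      push_cast [Nat.cast_sub h.le] at this
      linarith
    have hC0 : (s + n - 1 + 1) * ((s + n - 1).choose n) = (s + n - 1 + 1).choose (n+1) * (n+1) :=
      Nat.add_one_mul_choose_eq (s + n - 1) n
    have h2 : s + n - 1 + 1 = s + n := by omega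
    rw [h2] at hC0
    have eC : ((s + n).choose (n + 1) : ℚ)
        = ((s : ℚ) + n) * ((s + n - 1).choose n : ℚ) / ((n : ℚ) + 1) := by
      rw [eq_div_iff hn1]
      have := congrArg (fun k : ℕ => (k : ℚ)) hC0
      push_cast at this
      linarith
    have hden1 : ((s + n - 1).choose n : ℚ) ≠ 0 := by
      have : n ≤ s + n - 1 := by omega
      exact_mod_cast Nat.cast_ne_zero.mpr (Nat.choose_pos this).ne'
    have hsn : ((s : ℚ) + n) ≠ 0 := by positivity
    have hidx1 : r + (n + 1) - 1 = r + n := by omega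
    have hidx2 : s + (n + 1) - 1 = s + n := by omega
    rw [cz, cz, hidx1, hidx2, eA, eB, eC]
    field_simp
    ring

lemma ode (r m s : ℕ) (hr : 0 < r) (hs : 0 < s) :
    X * derivative (derivative (z r m s)) - X ^ 2 * derivative (derivative (z r m s))
      + C (s : ℚ) * derivative (z r m s)
      - C ((r : ℚ) - m + 1) * (X * derivative (z r m s))
      + C ((r : ℚ) * m) * z r m s = 0 := by
  ext n
  simp only [coeff_add, coeff_sub, coeff_C_mul, coeff_zero]
  match n with
  | 0 =>
    simp only [mul_coeff_zero, coeff_X_zero, zero_mul, pow_two, coeff_derivative, coeff_z]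
    have := rec_cz r m s hr hs 0
    push_cast at this ⊢
    linear_combination this
  | 1 =>
    rw [pow_two, mul_assoc]
    have e1 := coeff_X_mul (derivative (derivative (z r m s))) 0
    have e2 := coeff_X_mul (derivative (z r m s)) 0
    have e3 := coeff_X_mul (X * derivative (derivative (z r m s))) 0
    simp only [zero_add] at e1 e2 e3
    rw [e1, e2, e3]
    simp only [mul_coeff_zero, coeff_X_zero, zero_mul, coeff_derivative, coeff_z]
    have := rec_cz r m s hr hs 1
    push_cast at this ⊢
    linear_combination this
  | (k+2) =>
    rw [pow_two, mul_assoc]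
    have h2 : k + 2 = (k + 1) + 1 := rfl
    rw [h2, coeff_X_mul, coeff_X_mul, coeff_X_mul, coeff_X_mul]
    simp only [coeff_derivative, coeff_z]
    have := rec_cz r m s hr hs (k + 2)
    push_cast at this ⊢
    linear_combination this

/-- On any open interval avoiding `0, 1` on which `z` does not vanish, the seed solution
`q(t) = t + t(t−1)z′/(r z)` satisfies the Riccati equation
`q′ = (1/(t(t−1)))((b₄−b₃)q² + (2b₁t+b₂−b₄−1)q − (b₁+b₂)t)`. -/
theorem statement2 (r m s : ℕ) (hr : 0 < r) (hm : 0 < m) (hs : 0 < s) (a b : ℝ)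
    (hI : ∀ t ∈ Set.Ioo a b, t ≠ 0 ∧ t ≠ 1 ∧ zf r m s t ≠ 0) :
    let b₁ : ℝ := ((m : ℝ) + r + 1) / 2
    let b₂ : ℝ := ((m : ℝ) - r + 2 * s - 1) / 2
    let b₃ : ℝ := ((r : ℝ) + m - 1) / 2
    let b₄ : ℝ := ((m : ℝ) - r - 1) / 2
    ∀ t ∈ Set.Ioo a b,
      HasDerivAt (qseed r m s)
        ((1 / (t * (t - 1))) *
          ((b₄ - b₃) * (qseed r m s t) ^ 2 + (2 * b₁ * t + b₂ - b₄ - 1) * qseed r m s t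
            - (b₁ + b₂) * t)) t := by
  intro b₁ b₂ b₃ b₄ t ht
  obtain ⟨ht0, ht1, htz⟩ := hI t ht
  set w : ℝ := zf r m s t with hw
  set w' : ℝ := zf' r m s t with hw'
  set w'' : ℝ := aeval t (derivative (derivative (z r m s))) with hw''
  have hrR : ((r : ℝ)) ≠ 0 := Nat.cast_ne_zero.mpr hr.ne'
  have hrw : (r : ℝ) * w ≠ 0 := mul_ne_zero hrR htz
  -- the ODE evaluated at t
  have hode : t * w'' - t ^ 2 * w'' + (s : ℝ) * w' - ((r : ℝ) - m + 1) * (t * w')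
      + (r : ℝ) * m * w = 0 := by
    have h := congrArg (fun p : Polynomial ℚ => (aeval t : Polynomial ℚ →ₐ[ℚ] ℝ) p)
      (ode r m s hr hs)
    simp only [map_add, map_sub, map_mul, map_pow, aeval_X, aeval_C, map_zero] at h
    push_cast at h
    rw [hw, hw', hw'']
    unfold zf zf'
    convert h using 2 <;> push_cast <;> ring
  -- derivative of zf and zf'
  have hz : HasDerivAt (zf r m s) w' t := (z r m s).hasDerivAt_aeval t
  have hz' : HasDerivAt (zf' r m s) w'' t := (derivative (z r m s)).hasDerivAt_aeval t
  -- derivative of qseed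
  have hnum : HasDerivAt (fun u => u * (u - 1) * zf' r m s u)
      ((1 * (t - 1) + t * 1) * w' + t * (t - 1) * w'') t :=
    (((hasDerivAt_id t).mul ((hasDerivAt_id t).sub_const 1))).mul hz'
  have hden : HasDerivAt (fun u => (r : ℝ) * zf r m s u) ((r : ℝ) * w') t := hz.const_mul _
  have hq : HasDerivAt (qseed r m s)
      (1 + (((1 * (t - 1) + t * 1) * w' + t * (t - 1) * w'') * ((r : ℝ) * w)
          - t * (t - 1) * w' * ((r : ℝ) * w')) / ((r : ℝ) * w) ^ 2) t :=
    (hasDerivAt_id t).add (hnum.div hden hrw)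
  convert hq using 1
  have hq0 : qseed r m s t = t + t * (t - 1) * w' / ((r : ℝ) * w) := rfl
  have ht1' : t - 1 ≠ 0 := sub_ne_zero.mpr ht1
  have htt : t - t ^ 2 ≠ 0 := by
    have : t - t ^ 2 = -(t * (t - 1)) := by ring
    rw [this]
    exact neg_ne_zero.mpr (mul_ne_zero ht0 ht1')
  have hw2 : w'' = (((r : ℝ) - m + 1) * (t * w') - (s : ℝ) * w' - (r : ℝ) * m * w)
      / (t - t ^ 2) := by
    rw [eq_div_iff htt]
    linear_combination hode
  rw [hq0, hw2]
  unfold b₁ b₂ b₃ b₄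
  field_simp
  ring
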